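/- The linear span of {m*_σ : σ ∈ C} and the linear span of {m°_σ : σ ∈ C}, as subspaces of the real vector space of all functions from I_{H,1} to ℝ, coincide: every m*_σ is a finite linear combination of the functions m°_τ, τ ∈ C, and every m°_σ is a finite linear combination of the functions m*_τ, τ ∈ C. -/

import Mathlib

open MeasureTheory Set

/-- `β` is an interval partition of `[0, M]`: a collection of disjoint open
subintervals of `[0, M]` (encoded by their endpoint pairs) whose union has
full Lebesgue measure in `[0, M]`. -/
def IsIntervalPartition (M : ℝ) (β : Set (ℝ × ℝ)) : Prop :=
  0 ≤ M ∧ (∀ p ∈ β, 0 ≤ p.1 ∧ p.1 < p.2 ∧ p.2 ≤ M) ∧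
    β.PairwiseDisjoint (fun p => Set.Ioo p.1 p.2) ∧
    volume (Set.Icc (0 : ℝ) M \ ⋃ p ∈ β, Set.Ioo p.1 p.2) = 0

/-- A strictly increasing (in the left-to-right order) finite sequence of blocks. -/
def BlocksStrictMono {n : ℕ} (U : Fin n → ℝ × ℝ) : Prop :=
  ∀ i j : Fin n, i < j → (U i).2 ≤ (U j).1

/-- `σ` is an integer composition of `n`: a finite list of positive integers summing
to `n`. -/
def IsComposition (n : ℕ) (σ : List ℕ) : Prop :=
  (∀ p ∈ σ, 1 ≤ p) ∧ σ.sum = n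

/-- The quasi-symmetric monomial `m°_σ(β) = Σ_{U₁ < ⋯ < U_ℓ ∈ β} ∏_j Leb(U_j)^{σ_j}`,
summing over strictly increasing `ℓ(σ)`-tuples of blocks of `β`. -/
noncomputable def mCirc (σ : List ℕ) (β : Set (ℝ × ℝ)) : ℝ :=
  ∑' U : {U : Fin σ.length → ℝ × ℝ // (∀ j, U j ∈ β) ∧ BlocksStrictMono U},
    ∏ j : Fin σ.length, ((U.1 j).2 - (U.1 j).1) ^ (σ.get j)

/-- The total mass of the blocks of `β` contained in `[u, v]`
(i.e. lying strictly between neighbouring chosen blocks). -/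
noncomputable def massBetween (β : Set (ℝ × ℝ)) (u v : ℝ) : ℝ :=
  ∑' p : {p : ℝ × ℝ // p ∈ β ∧ u ≤ p.1 ∧ p.2 ≤ v}, (p.1.2 - p.1.1)

/-- `m*_σ(β)` for the composition
`σ = 1^{L 0} ⋆ s 0 ⋆ 1^{L 1} ⋆ s 1 ⋆ ⋯ ⋆ s (k-1) ⋆ 1^{L k}` (every composition
decomposes uniquely in this way with all `s i ≥ 2`): the sum over strictly increasing
choices `U : Fin k → β` of
`‖β₀‖^{L 0} · ∏_i Leb(U i)^{s i} · ‖β_{i+1}‖^{L (i+1)}`, where `‖β_j‖` is the total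
mass of the blocks of `β` between consecutive chosen blocks (or before the first /
after the last), and `M` is the total mass of `β`. -/
noncomputable def mStar (k : ℕ) (s : Fin k → ℕ) (L : Fin (k + 1) → ℕ) (M : ℝ)
    (β : Set (ℝ × ℝ)) : ℝ :=
  ∑' U : {U : Fin k → ℝ × ℝ // (∀ j, U j ∈ β) ∧ BlocksStrictMono U},
    massBetween β 0 (if h : 0 < k then (U.1 ⟨0, h⟩).1 else M) ^ (L 0) *
      ∏ i : Fin k,
        (((U.1 i).2 - (U.1 i).1) ^ (s i) *
          massBetween β (U.1 i).2
              (if h : (i : ℕ) + 1 < k then (U.1 ⟨(i : ℕ) + 1, h⟩).1 else M) ^ (L i.succ))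

/-- The set `I_{H,1}` of interval partitions of `[0,1]`. -/
def IH1 : Type := {β : Set (ℝ × ℝ) // IsIntervalPartition 1 β}

open scoped ENNReal Classical

namespace IPgame

noncomputable section

/-- length of a block, as extended nonneg real -/
def lenE (p : ℝ × ℝ) : ℝ≥0∞ := ENNReal.ofReal (p.2 - p.1)

variable {B : Set (ℝ × ℝ)}

/-- blocks of `B` inside `[a,b]` -/
def Gsub (B : Set (ℝ × ℝ)) (a b : ℝ) : Type := {p : ℝ × ℝ // p ∈ B ∧ a ≤ p.1 ∧ p.2 ≤ b}

/-- ENNReal mass between -/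
def mBE (B : Set (ℝ × ℝ)) (a b : ℝ) : ℝ≥0∞ := ∑' p : Gsub B a b, lenE p.1

section basic

variable (hB : IsIntervalPartition 1 B)

theorem block_lt (hB : IsIntervalPartition 1 B) (hp : p ∈ B) : p.1 < p.2 := (hB.2.1 p hp).2.1
theorem block_nonneg (hB : IsIntervalPartition 1 B) (hp : p ∈ B) : (0:ℝ) ≤ p.1 := (hB.2.1 p hp).1
theorem block_le_one (hB : IsIntervalPartition 1 B) (hp : p ∈ B) : p.2 ≤ 1 := (hB.2.1 p hp).2.2

/-- two blocks with the same left endpoint coincide -/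
theorem block_inj (hB : IsIntervalPartition 1 B) {p q : ℝ × ℝ} (hp : p ∈ B) (hq : q ∈ B) (h : p.1 = q.1) : p = q := by
  by_contra hne
  have hd := hB.2.2.1 hp hq hne
  have h1 : p.1 < min p.2 q.2 := lt_min (block_lt hB hp) (h ▸ block_lt hB hq)
  set x := (p.1 + min p.2 q.2) / 2 with hx
  have hx1 : p.1 < x := by simp [hx]; linarith
  have hx2 : x < min p.2 q.2 := by simp only [hx]; linarith
  exact (Set.disjoint_left.1 hd ⟨hx1, lt_of_lt_of_le hx2 (min_le_left _ _)⟩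
    ⟨h ▸ hx1, lt_of_lt_of_le hx2 (min_le_right _ _)⟩)

/-- disjointness: strictly later block starts after the earlier ends -/
theorem block_ord (hB : IsIntervalPartition 1 B) {p q : ℝ × ℝ} (hp : p ∈ B) (hq : q ∈ B) (h : p.1 < q.1) : p.2 ≤ q.1 := by
  by_contra hlt
  push_neg at hlt
  have hne : p ≠ q := fun e => absurd (congrArg Prod.fst e) (ne_of_lt h)
  have hd := hB.2.2.1 hp hq hne
  have h1 : q.1 < min p.2 q.2 := lt_min hlt (block_lt hB hq)
  set x := (q.1 + min p.2 q.2) / 2 with hx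
  have hx1 : q.1 < x := by simp [hx]; linarith
  have hx2 : x < min p.2 q.2 := by simp only [hx]; linarith
  exact (Set.disjoint_left.1 hd
    ⟨lt_of_le_of_lt (le_of_lt h) hx1, lt_of_lt_of_le hx2 (min_le_left _ _)⟩
    ⟨hx1, lt_of_lt_of_le hx2 (min_le_right _ _)⟩)

theorem lenE_ne_top (p : ℝ × ℝ) : lenE p ≠ ⊤ := ENNReal.ofReal_ne_top

theorem lenE_le_one (hB : IsIntervalPartition 1 B) {p : ℝ × ℝ} (hp : p ∈ B) : lenE p ≤ 1 := by
  rw [lenE, ← ENNReal.ofReal_one]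
  exact ENNReal.ofReal_le_ofReal (by linarith [block_nonneg hB hp, block_le_one hB hp])

/-- total mass of any subfamily of blocks is at most 1 -/
theorem tsum_lenE_le_one (hB : IsIntervalPartition 1 B) {ι : Type*} (g : ι → ℝ × ℝ) (hg : ∀ i, g i ∈ B)
    (hinj : Function.Injective g) : ∑' i, lenE (g i) ≤ 1 := by
  rw [ENNReal.tsum_eq_iSup_sum]
  refine iSup_le fun F => ?_
  have hle : ∑ i ∈ F, lenE (g i) = volume (⋃ i ∈ F, Set.Ioo (g i).1 (g i).2) := by
    rw [measure_biUnion_finset]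
    · refine Finset.sum_congr rfl fun i _ => ?_
      rw [Real.volume_Ioo, lenE]
    · intro i _ j _ hij
      exact hB.2.2.1 (hg i) (hg j) (fun e => hij (hinj e))
    · exact fun i _ => measurableSet_Ioo
  rw [hle]
  have : (⋃ i ∈ F, Set.Ioo (g i).1 (g i).2) ⊆ Set.Icc (0:ℝ) 1 := by
    refine Set.iUnion₂_subset fun i _ => ?_
    intro x hx
    exact ⟨le_of_lt (lt_of_le_of_lt (block_nonneg hB (hg i)) hx.1),
      le_of_lt (lt_of_lt_of_le hx.2 (block_le_one hB (hg i)))⟩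
  calc volume (⋃ i ∈ F, Set.Ioo (g i).1 (g i).2) ≤ volume (Set.Icc (0:ℝ) 1) :=
        measure_mono this
    _ = 1 := by rw [Real.volume_Icc]; norm_num

theorem mBE_le_one (hB : IsIntervalPartition 1 B) (a b : ℝ) : mBE B a b ≤ 1 :=
  tsum_lenE_le_one hB (fun p : Gsub B a b => p.1) (fun p => p.2.1)
    (fun p q h => Subtype.ext h)

theorem mBE_ne_top (hB : IsIntervalPartition 1 B) (a b : ℝ) : mBE B a b ≠ ⊤ :=
  ne_top_of_le_ne_top ENNReal.one_ne_top (mBE_le_one hB a b)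

end basic

/-- cons equivalence for tuples -/
def consEquiv (ι : Type*) (n : ℕ) : (ι × (Fin n → ι)) ≃ (Fin (n+1) → ι) where
  toFun := fun x => Fin.cons x.1 x.2
  invFun := fun v => (v 0, fun i => v i.succ)
  left_inv := fun x => by simp
  right_inv := fun v => by
    funext i
    refine Fin.cases ?_ ?_ i <;> simp

/-- power of a tsum, over `Fin n` tuples -/
theorem tsum_pow_fin {ι : Type*} (f : ι → ℝ≥0∞) (n : ℕ) :
    (∑' x, f x) ^ n = ∑' v : Fin n → ι, ∏ i, f (v i) := by
  induction n with
  | zero =>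
      simp only [pow_zero]
      rw [tsum_eq_single (fun i => i.elim0)]
      · simp
      · intro v hv; exact absurd (funext fun i => i.elim0) (Ne.symm hv)
  | succ n ih =>
      rw [← (consEquiv ι n).tsum_eq, ENNReal.tsum_prod']
      have h2 : ∀ x : ι, ∀ w : Fin n → ι,
          (∏ i : Fin (n+1), f ((consEquiv ι n (x, w)) i)) = f x * ∏ i : Fin n, f (w i) := by
        intro x w
        rw [Fin.prod_univ_succ]
        simp only [consEquiv, Equiv.coe_fn_mk, Fin.cons_zero, Fin.cons_succ]
      simp only [h2]
      rw [pow_succ, ih, mul_comm]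
      simp only [ENNReal.tsum_mul_left]
      rw [ENNReal.tsum_mul_right]

/-- power of a tsum over tuples indexed by a fintype -/
theorem tsum_pow_fintype {ι : Type*} (f : ι → ℝ≥0∞) (κ : Type*) [Fintype κ] :
    (∑' x, f x) ^ (Fintype.card κ) = ∑' w : κ → ι, ∏ i, f (w i) := by
  classical
  obtain ⟨e⟩ : Nonempty (κ ≃ Fin (Fintype.card κ)) := ⟨Fintype.equivFin κ⟩
  rw [tsum_pow_fin,
    ← (Equiv.arrowCongr e (Equiv.refl ι)).tsum_eq
      (fun v : Fin (Fintype.card κ) → ι => ∏ j, f (v j))]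
  refine tsum_congr fun w => ?_
  exact Fintype.prod_equiv e.symm _ _ (fun j => by simp [Equiv.arrowCongr])

section star

/-- the subtype of blocks strictly to the right of a block `p` within `(a,b)`
is the same as blocks in `(p.2, b)` -/
theorem tsum_gt_eq_mBE (hB : IsIntervalPartition 1 B) {a b : ℝ} [LO : LinearOrder (Gsub B a b)]
    (hlt : ∀ u v : Gsub B a b, u < v ↔ u.1.1 < v.1.1)
    (p : Gsub B a b) :
    (∑' q : {q : Gsub B a b // p < q}, lenE q.1.1) = mBE B p.1.2 b := by
  rw [mBE]
  exact Equiv.tsum_eq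
    (⟨fun q => ⟨q.1.1, q.1.2.1, block_ord hB p.2.1 q.1.2.1 ((hlt p q.1).1 q.2), q.1.2.2.2⟩,
      fun x => ⟨⟨x.1, x.2.1,
          le_trans p.2.2.1 (le_trans (le_of_lt (block_lt hB p.2.1)) x.2.2.1), x.2.2.2⟩,
        (hlt _ _).2 (lt_of_lt_of_le (block_lt hB p.2.1) x.2.2.1)⟩,
      fun q => rfl, fun x => rfl⟩ : {q : Gsub B a b // p < q} ≃ Gsub B p.1.2 b)
    (fun x => lenE x.1)

/-- the key expansion of a power of a mass by the minimal chosen block -/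
theorem star (hB : IsIntervalPartition 1 B) (a b : ℝ) {t : ℕ} (ht : 1 ≤ t) :
    mBE B a b ^ t = ∑ r ∈ Finset.Icc 1 t, (t.choose r : ℝ≥0∞) *
      ∑' p : Gsub B a b, lenE p.1 ^ r * mBE B p.1.2 b ^ (t - r) := by
  classical
  set G := Gsub B a b with hG
  have hinj : Function.Injective (fun p : G => p.1.1) := by
    intro u v h
    exact Subtype.ext (block_inj hB u.2.1 v.2.1 h)
  letI LO : LinearOrder G := LinearOrder.lift' (fun p : G => p.1.1) hinj
  have hle : ∀ u v : G, u ≤ v ↔ u.1.1 ≤ v.1.1 := fun u v => Iff.rfl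
  have hlt : ∀ u v : G, u < v ↔ u.1.1 < v.1.1 := by
    intro u v
    rw [lt_iff_le_not_ge, hle, hle, lt_iff_le_not_ge]
  haveI hne : Nonempty (Fin t) := ⟨⟨0, ht⟩⟩
  set vmin : (Fin t → G) → G := fun v => Finset.min' (Finset.univ.image v)
    ((Finset.univ_nonempty).image v) with hvmin
  set Aset : (Fin t → G) → Finset (Fin t) := fun v =>
    Finset.univ.filter (fun i => v i = vmin v) with hAset
  have hvmin_le : ∀ (v : Fin t → G) (i : Fin t), vmin v ≤ v i := by
    intro v i
    exact Finset.min'_le _ _ (Finset.mem_image_of_mem v (Finset.mem_univ i))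
  have hvmin_mem : ∀ v : Fin t → G, ∃ i, v i = vmin v := by
    intro v
    obtain ⟨i, -, hi⟩ := Finset.mem_image.1 (Finset.min'_mem (Finset.univ.image v)
      ((Finset.univ_nonempty).image v))
    exact ⟨i, hi⟩
  set h : ℕ → ℝ≥0∞ := fun r => ∑' p : G, lenE p.1 ^ r * mBE B p.1.2 b ^ (t - r) with hh
  set g : ℕ → ℝ≥0∞ := fun r => if r = 0 then 0 else h r with hg
  -- fibers over (Aset, vmin)
  have hfiber : ∀ A : Finset (Fin t),
      (∑' v : {v : Fin t → G // Aset v = A}, ∏ i, lenE (v.1 i).1) = g A.card := by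
    intro A
    rcases eq_or_ne A ∅ with hA | hA
    · subst hA
      haveI : IsEmpty {v : Fin t → G // Aset v = ∅} := by
        constructor
        rintro ⟨v, hv⟩
        obtain ⟨i, hi⟩ := hvmin_mem v
        have hmem : i ∈ Aset v := by simp [hAset, hi]
        rw [hv] at hmem
        exact absurd hmem (Finset.notMem_empty i)
      rw [tsum_empty]
      simp [hg]
    · have hAne : A.Nonempty := Finset.nonempty_iff_ne_empty.2 hA
      rw [← (Equiv.sigmaFiberEquiv (fun v : {v : Fin t → G // Aset v = A} => vmin v.1)).tsum_eq,
        ENNReal.tsum_sigma']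
      have hfix : ∀ p : G,
          (∑' v : {v : {v : Fin t → G // Aset v = A} // vmin v.1 = p}, ∏ i, lenE (v.1.1 i).1)
            = lenE p.1 ^ A.card * mBE B p.1.2 b ^ (t - A.card) := by
        intro p
        obtain ⟨E, hE⟩ : ∃ E : {v : {v : Fin t → G // Aset v = A} // vmin v.1 = p} ≃
            ({i : Fin t // i ∉ A} → {q : G // p < q}),
            ∀ w i, ((E.symm w).1.1 i) = if h' : i ∈ A then p else (w ⟨i, h'⟩).1 := by
          have fact : ∀ w : ({i : Fin t // i ∉ A} → {q : G // p < q}),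
              vmin (fun i => if h' : i ∈ A then p else (w ⟨i, h'⟩).1) = p ∧
              Aset (fun i => if h' : i ∈ A then p else (w ⟨i, h'⟩).1) = A := by
            intro w
            set v : Fin t → G := fun i => if h' : i ∈ A then p else (w ⟨i, h'⟩).1 with hv
            obtain ⟨i₀, hi₀⟩ := hAne
            have h1 : vmin v = p := by
              refine le_antisymm ?_ ?_
              · refine Finset.min'_le _ _ ?_
                refine Finset.mem_image.2 ⟨i₀, Finset.mem_univ _, ?_⟩
                simp [hv, hi₀]
              · refine Finset.le_min' _ _ _ ?_
                intro y hy
                obtain ⟨i, -, rfl⟩ := Finset.mem_image.1 hy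
                by_cases h' : i ∈ A
                · simp [hv, h']
                · have := (w ⟨i, h'⟩).2
                  simp only [hv, dif_neg h']
                  exact le_of_lt this
            refine ⟨h1, ?_⟩
            ext i
            simp only [hAset, Finset.mem_filter, Finset.mem_univ, true_and, h1]
            constructor
            · intro hvi
              by_contra h'
              have hgt := (w ⟨i, h'⟩).2
              rw [show v i = (w ⟨i, h'⟩).1 by simp [hv, dif_neg h']] at hvi
              rw [hvi] at hgt
              exact lt_irrefl _ hgt
            · intro h'
              simp [hv, h']
          refine ⟨⟨fun v i => ⟨v.1.1 i.1, ?_⟩,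
            fun w => ⟨⟨fun i => if h' : i ∈ A then p else (w ⟨i, h'⟩).1, (fact w).2⟩, (fact w).1⟩,
            ?_, ?_⟩, fun w i => rfl⟩
          · have hle' := hvmin_le v.1.1 i.1
            rw [v.2] at hle'
            refine lt_of_le_of_ne hle' ?_
            intro hpe
            have hmem : i.1 ∈ Aset v.1.1 := by
              simp only [hAset, Finset.mem_filter, Finset.mem_univ, true_and]
              rw [← hpe, v.2]
            rw [v.1.2] at hmem
            exact i.2 hmem
          · intro v
            refine Subtype.ext (Subtype.ext (funext fun i => ?_))
            by_cases h' : i ∈ A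
            · simp only [dif_pos h']
              have hm : i ∈ Aset v.1.1 := v.1.2.symm ▸ h'
              simp only [hAset, Finset.mem_filter, Finset.mem_univ, true_and] at hm
              rw [hm, v.2]
            · simp only [dif_neg h']
          · intro w
            funext i
            refine Subtype.ext ?_
            show (if h' : i.1 ∈ A then p else (w ⟨i.1, h'⟩).1) = (w i).1
            rw [dif_neg i.2]
        have hterm : ∀ w : ({i : Fin t // i ∉ A} → {q : G // p < q}),
            (∏ i, lenE ((E.symm w).1.1 i).1) =
              lenE p.1 ^ A.card * ∏ i : {i : Fin t // i ∉ A}, lenE (w i).1.1 := by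
          intro w
          simp only [hE]
          rw [← Finset.prod_filter_mul_prod_filter_not Finset.univ (· ∈ A)]
          congr 1
          · rw [Finset.prod_congr rfl (fun i hi => by
              rw [dif_pos (Finset.mem_filter.1 hi).2])]
            rw [Finset.prod_const]
            congr 1
            simp only [Finset.filter_univ_mem]
          · rw [Finset.prod_subtype (p := fun i => i ∉ A) (Finset.univ.filter (· ∉ A))
              (fun i => by simp) (fun i => lenE (if h' : i ∈ A then p else (w ⟨i, h'⟩).1).1)]
            refine Finset.prod_congr rfl fun i _ => ?_
            rw [dif_neg i.2]
        rw [← E.symm.tsum_eq, tsum_congr hterm, ENNReal.tsum_mul_left]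
        congr 1
        have hcard : t - A.card = Fintype.card {i : Fin t // i ∉ A} := by
          simp [Fintype.card_subtype_compl]
        rw [← tsum_gt_eq_mBE hB hlt p, hcard, tsum_pow_fintype]
      refine Eq.trans (tsum_congr hfix) ?_
      simp only [hg]
      rw [if_neg (by simpa using hAne.card_pos.ne')]
  conv_lhs => rw [mBE, tsum_pow_fin]
  rw [← (Equiv.sigmaFiberEquiv Aset).tsum_eq, ENNReal.tsum_sigma', tsum_fintype]
  refine Eq.trans (Finset.sum_congr rfl fun A _ => hfiber A) ?_
  have hps := Finset.sum_powerset (Finset.univ : Finset (Fin t)) (fun A => g A.card)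
  rw [Finset.powerset_univ, Finset.card_univ, Fintype.card_fin] at hps
  rw [hps]
  have hcards : ∀ r ∈ Finset.range (t + 1),
      (∑ A ∈ Finset.powersetCard r (Finset.univ : Finset (Fin t)), g A.card)
        = (t.choose r : ℝ≥0∞) * g r := by
    intro r _
    have hc : ∀ A ∈ Finset.powersetCard r (Finset.univ : Finset (Fin t)), g A.card = g r :=
      fun A hA => by rw [(Finset.mem_powersetCard.1 hA).2]
    rw [Finset.sum_congr rfl hc, Finset.sum_const, Finset.card_powersetCard,
      Finset.card_univ, Fintype.card_fin, nsmul_eq_mul]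
  refine Eq.trans (Finset.sum_congr rfl hcards) ?_
  refine Eq.trans ((Finset.sum_subset ?_ ?_).symm :
      (∑ r ∈ Finset.range (t+1), (t.choose r : ℝ≥0∞) * g r)
        = ∑ r ∈ Finset.Icc 1 t, (t.choose r : ℝ≥0∞) * g r)
    (Finset.sum_congr rfl (fun r hr => ?_))
  · intro r hr
    rw [Finset.mem_Icc] at hr
    rw [Finset.mem_range]
    omega
  · intro r hr hr2
    rw [Finset.mem_range] at hr
    rw [Finset.mem_Icc] at hr2
    have hr0 : r = 0 := by omega
    subst hr0
    simp [hg]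
  · rw [Finset.mem_Icc] at hr
    simp only [hg, hh]
    rw [if_neg (by omega)]

end star

/-! ### the recursive model for `mStar`-type sums -/

/-- recursive sum over configurations: `d` is a list of pairs
(gap exponent, block exponent), `G` the continuation applied to the right
endpoint of the last chosen block -/
noncomputable def Fext (B : Set (ℝ × ℝ)) : List (ℕ × ℕ) → (ℝ → ℝ≥0∞) → ℝ → ℝ≥0∞
  | [], G, a => G a
  | q :: d, G, a =>
      ∑' p : Gsub B a 1, mBE B a p.1.1 ^ q.1 * (lenE p.1 ^ q.2 * Fext B d G p.1.2)

/-- the full configuration sum, with trailing gap exponent `T` -/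
noncomputable def FF (B : Set (ℝ × ℝ)) (d : List (ℕ × ℕ)) (T : ℕ) (a : ℝ) : ℝ≥0∞ :=
  Fext B d (fun x => mBE B x 1 ^ T) a

theorem Fext_nil (B : Set (ℝ × ℝ)) (G : ℝ → ℝ≥0∞) (a : ℝ) : Fext B [] G a = G a := rfl

theorem Fext_cons (B : Set (ℝ × ℝ)) (q : ℕ × ℕ) (d : List (ℕ × ℕ)) (G : ℝ → ℝ≥0∞) (a : ℝ) :
    Fext B (q :: d) G a =
      ∑' p : Gsub B a 1, mBE B a p.1.1 ^ q.1 * (lenE p.1 ^ q.2 * Fext B d G p.1.2) := rfl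

theorem Fext_append (B : Set (ℝ × ℝ)) (d₁ d₂ : List (ℕ × ℕ)) (G : ℝ → ℝ≥0∞) (a : ℝ) :
    Fext B (d₁ ++ d₂) G a = Fext B d₁ (Fext B d₂ G) a := by
  induction d₁ generalizing a with
  | nil => rfl
  | cons q d ih =>
      rw [List.cons_append, Fext_cons, Fext_cons]
      exact tsum_congr fun p => by rw [ih]

theorem Fext_lift (B : Set (ℝ × ℝ)) (fs : Finset ℕ) (w : ℕ → ℝ≥0∞) (Gr : ℕ → ℝ → ℝ≥0∞)
    (G : ℝ → ℝ≥0∞) (hG : ∀ x, G x = ∑ r ∈ fs, w r * Gr r x) (d : List (ℕ × ℕ)) (a : ℝ) :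
    Fext B d G a = ∑ r ∈ fs, w r * Fext B d (Gr r) a := by
  induction d generalizing a with
  | nil => exact hG a
  | cons q d ih =>
      rw [Fext_cons]
      have h1 : ∀ p : Gsub B a 1,
          mBE B a p.1.1 ^ q.1 * (lenE p.1 ^ q.2 * Fext B d G p.1.2)
            = ∑ r ∈ fs, w r * (mBE B a p.1.1 ^ q.1 *
                (lenE p.1 ^ q.2 * Fext B d (Gr r) p.1.2)) := by
        intro p
        rw [ih p.1.2, Finset.mul_sum, Finset.mul_sum]
        exact Finset.sum_congr rfl fun r _ => by ring
      rw [tsum_congr h1, Summable.tsum_finsetSum (fun r _ => ENNReal.summable)]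
      exact Finset.sum_congr rfl fun r _ => by
        rw [ENNReal.tsum_mul_left, Fext_cons]

/-- swapping a chosen block and an extra block to its left -/
theorem tsum_swap_pair (hB : IsIntervalPartition 1 B) (a : ℝ) (H : ℝ × ℝ → ℝ × ℝ → ℝ≥0∞) :
    (∑' p : Gsub B a 1, ∑' q : Gsub B a p.1.1, H q.1 p.1)
      = ∑' q : Gsub B a 1, ∑' p : Gsub B q.1.2 1, H q.1 p.1 := by
  refine Eq.trans (ENNReal.tsum_sigma'
    (fun c : Σ p : Gsub B a 1, Gsub B a p.1.1 => H c.2.1 c.1.1)).symm ?_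
  refine Eq.trans ?_ (ENNReal.tsum_sigma'
    (fun c : Σ q : Gsub B a 1, Gsub B q.1.2 1 => H c.1.1 c.2.1))
  exact (Equiv.tsum_eq
    (⟨fun c => ⟨⟨c.2.1, c.2.2.1,
        le_trans c.1.2.2.1 (le_trans (le_of_lt (block_lt hB c.1.2.1)) c.2.2.2.1),
        c.2.2.2.2⟩,
      ⟨c.1.1, c.1.2.1, c.1.2.2.1, c.2.2.2.1⟩⟩,
      fun c => ⟨⟨c.2.1, c.2.2.1, c.2.2.2.1,
        le_trans c.2.2.2.2 (le_trans (le_of_lt (block_lt hB c.1.2.1)) c.1.2.2.2)⟩,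
      ⟨c.1.1, c.1.2.1, c.2.2.2.2, c.1.2.2.2⟩⟩,
      fun c => rfl, fun c => rfl⟩ :
        (Σ q : Gsub B a 1, Gsub B q.1.2 1) ≃ (Σ p : Gsub B a 1, Gsub B a p.1.1))
    (fun c : Σ p : Gsub B a 1, Gsub B a p.1.1 => H c.2.1 c.1.1)).symm

/-- the key identity, expanding the gap just before a block -/
theorem key_cons (hB : IsIntervalPartition 1 B) {t : ℕ} (ht : 1 ≤ t) (s' : ℕ)
    (d : List (ℕ × ℕ)) (G : ℝ → ℝ≥0∞) (a : ℝ) :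
    Fext B ((t, s') :: d) G a
      = ∑ r ∈ Finset.Icc 1 t, (t.choose r : ℝ≥0∞) *
          Fext B ((0, r) :: (t - r, s') :: d) G a := by
  rw [Fext_cons]
  have h1 : ∀ p : Gsub B a 1,
      mBE B a p.1.1 ^ t * (lenE p.1 ^ s' * Fext B d G p.1.2)
        = ∑ r ∈ Finset.Icc 1 t, (t.choose r : ℝ≥0∞) *
            ∑' q : Gsub B a p.1.1,
              lenE q.1 ^ r * (mBE B q.1.2 p.1.1 ^ (t - r) *
                (lenE p.1 ^ s' * Fext B d G p.1.2)) := by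
    intro p
    rw [star hB a p.1.1 ht, Finset.sum_mul]
    refine Finset.sum_congr rfl fun r _ => ?_
    rw [mul_assoc]
    congr 1
    rw [← ENNReal.tsum_mul_right]
    exact tsum_congr fun q => by ring
  rw [tsum_congr h1, Summable.tsum_finsetSum (fun r _ => ENNReal.summable)]
  refine Finset.sum_congr rfl fun r hr => ?_
  rw [ENNReal.tsum_mul_left]
  congr 1
  rw [tsum_swap_pair hB a (fun q p => lenE q ^ r * (mBE B q.2 p.1 ^ (t - r) *
    (lenE p ^ s' * Fext B d G p.2)))]
  rw [Fext_cons]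
  refine tsum_congr fun q => ?_
  rw [pow_zero, one_mul, Fext_cons, ENNReal.tsum_mul_left]

/-- the key identity for the trailing gap -/
theorem key_last (hB : IsIntervalPartition 1 B) {t : ℕ} (ht : 1 ≤ t) (a : ℝ) :
    mBE B a 1 ^ t = ∑ r ∈ Finset.Icc 1 t, (t.choose r : ℝ≥0∞) *
      Fext B [(0, r)] (fun x => mBE B x 1 ^ (t - r)) a := by
  rw [star hB a 1 ht]
  refine Finset.sum_congr rfl fun r _ => ?_
  congr 1
  rw [Fext_cons]
  exact tsum_congr fun p => by rw [pow_zero, one_mul, Fext_nil]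

/-- key identity at the level of full configurations: expanding an inner gap -/
theorem keyF_cons (hB : IsIntervalPartition 1 B) (pre : List (ℕ × ℕ)) {t : ℕ} (ht : 1 ≤ t)
    (s' : ℕ) (post : List (ℕ × ℕ)) (T : ℕ) (a : ℝ) :
    FF B (pre ++ (t, s') :: post) T a
      = ∑ r ∈ Finset.Icc 1 t, (t.choose r : ℝ≥0∞) *
          FF B (pre ++ (0, r) :: (t - r, s') :: post) T a := by
  rw [FF, Fext_append]
  rw [Fext_lift B (Finset.Icc 1 t) (fun r => (t.choose r : ℝ≥0∞))
    (fun r => Fext B ((0, r) :: (t - r, s') :: post) (fun x => mBE B x 1 ^ T))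
    _ (fun x => key_cons hB ht s' post _ x) pre a]
  exact Finset.sum_congr rfl fun r _ => by rw [FF, Fext_append]

/-- key identity at the level of full configurations: expanding the final gap -/
theorem keyF_last (hB : IsIntervalPartition 1 B) (d : List (ℕ × ℕ)) {T : ℕ} (hT : 1 ≤ T)
    (a : ℝ) :
    FF B d T a
      = ∑ r ∈ Finset.Icc 1 T, (T.choose r : ℝ≥0∞) * FF B (d ++ [(0, r)]) (T - r) a := by
  rw [FF]
  rw [Fext_lift B (Finset.Icc 1 T) (fun r => (T.choose r : ℝ≥0∞))
    (fun r => Fext B [(0, r)] (fun x => mBE B x 1 ^ (T - r)))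
    _ (fun x => key_last hB hT x) d a]
  exact Finset.sum_congr rfl fun r _ => by rw [FF, Fext_append]

/-! ### bridge to `mStar` -/

/-- region-restricted strictly increasing tuples of blocks -/
def TT (B : Set (ℝ × ℝ)) (a : ℝ) (k : ℕ) : Type :=
  {U : Fin k → ℝ × ℝ // (∀ j, U j ∈ B ∧ a ≤ (U j).1 ∧ (U j).2 ≤ 1) ∧ BlocksStrictMono U}

/-- ENNReal, region-restricted version of `mStar` -/
noncomputable def mStarRE (B : Set (ℝ × ℝ)) (a : ℝ) (k : ℕ) (s : Fin k → ℕ)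
    (L : Fin (k + 1) → ℕ) : ℝ≥0∞ :=
  ∑' U : TT B a k,
    mBE B a (if h : 0 < k then (U.1 ⟨0, h⟩).1 else 1) ^ L 0 *
      ∏ i : Fin k, (lenE (U.1 i) ^ s i *
        mBE B (U.1 i).2 (if h : (i : ℕ) + 1 < k then (U.1 ⟨(i : ℕ) + 1, h⟩).1 else 1) ^ L i.succ)

theorem mStarRE_eq_FF (hB : IsIntervalPartition 1 B) (a : ℝ) (k : ℕ) (s : Fin k → ℕ)
    (L : Fin (k + 1) → ℕ) :
    mStarRE B a k s L = FF B (List.ofFn fun i => (L i.castSucc, s i)) (L (Fin.last k)) a := by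
  induction k generalizing a with
  | zero =>
      rw [mStarRE, List.ofFn_zero, FF, Fext_nil]
      refine Eq.trans (tsum_eq_single (L := SummationFilter.unconditional (TT B a 0))
        (⟨fun i => i.elim0, fun j => j.elim0, fun i _ _ => i.elim0⟩ : TT B a 0)
        (fun U hU => absurd (Subtype.ext (funext fun i => i.elim0)) hU)) ?_
      simp only [dif_neg (lt_irrefl 0)]
      rw [Finset.univ_eq_empty, Finset.prod_empty, mul_one]
      rfl
  | succ k ih =>
      -- peel off the first block
      obtain ⟨E, hE⟩ : ∃ E : (Σ p : Gsub B a 1, TT B p.1.2 k) ≃ TT B a (k + 1),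
          ∀ c, (E c).1 = Fin.cons c.1.1 c.2.1 := by
        refine ⟨⟨fun c => ⟨Fin.cons c.1.1 c.2.1, ⟨fun j => ?_, fun i j hij => ?_⟩⟩,
          fun U => ⟨⟨U.1 0, (U.2.1 0).1, (U.2.1 0).2.1, (U.2.1 0).2.2⟩,
            ⟨fun i => U.1 i.succ, ⟨fun j => ⟨(U.2.1 j.succ).1,
                U.2.2 0 j.succ (Fin.succ_pos j), (U.2.1 j.succ).2.2⟩,
              fun i j hij => U.2.2 i.succ j.succ (Fin.succ_lt_succ_iff.2 hij)⟩⟩⟩,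
          fun c => ?_, fun U => ?_⟩, fun c => rfl⟩
        · induction j using Fin.cases with
          | zero =>
              simp only [Fin.cons_zero]
              exact ⟨c.1.2.1, c.1.2.2.1, c.1.2.2.2⟩
          | succ j' =>
              simp only [Fin.cons_succ]
              refine ⟨(c.2.2.1 j').1, ?_, (c.2.2.1 j').2.2⟩
              exact le_trans c.1.2.2.1
                (le_trans (le_of_lt (block_lt hB c.1.2.1)) (c.2.2.1 j').2.1)
        · induction j using Fin.cases with
          | zero => exact absurd hij (by simp [Fin.lt_def])
          | succ j' =>
              induction i using Fin.cases with
              | zero =>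
                  simp only [Fin.cons_zero, Fin.cons_succ]
                  exact (c.2.2.1 j').2.1
              | succ i' =>
                  simp only [Fin.cons_succ]
                  exact c.2.2.2 i' j' (Fin.succ_lt_succ_iff.1 hij)
        · refine Sigma.ext (Subtype.ext rfl) (heq_of_eq (Subtype.ext (funext fun i => ?_)))
          simp [Fin.cons_succ]
        · refine Subtype.ext (funext fun i => ?_)
          induction i using Fin.cases with
          | zero => simp
          | succ i' => simp
      rw [mStarRE, ← E.tsum_eq, ENNReal.tsum_sigma']
      have hpoint : ∀ (p : Gsub B a 1) (V : TT B p.1.2 k),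
          (mBE B a (if h : 0 < k + 1 then ((E ⟨p, V⟩).1 ⟨0, h⟩).1 else 1) ^ L 0 *
            ∏ i : Fin (k + 1), (lenE ((E ⟨p, V⟩).1 i) ^ s i *
              mBE B ((E ⟨p, V⟩).1 i).2
                (if h : (i : ℕ) + 1 < k + 1 then ((E ⟨p, V⟩).1 ⟨(i : ℕ) + 1, h⟩).1 else 1)
                  ^ L i.succ))
            = mBE B a p.1.1 ^ L 0 * (lenE p.1 ^ s 0 *
                (mBE B p.1.2 (if h : 0 < k then (V.1 ⟨0, h⟩).1 else 1) ^ (L ∘ Fin.succ) 0 *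
                  ∏ i : Fin k, (lenE (V.1 i) ^ (s ∘ Fin.succ) i *
                    mBE B (V.1 i).2
                      (if h : (i : ℕ) + 1 < k then (V.1 ⟨(i : ℕ) + 1, h⟩).1 else 1)
                        ^ (L ∘ Fin.succ) i.succ))) := by
        intro p V
        have hsucc : ∀ (m : ℕ) (hm : m + 1 < k + 1),
            (Fin.cons p.1 V.1 : Fin (k+1) → ℝ × ℝ) ⟨m + 1, hm⟩
              = V.1 ⟨m, Nat.succ_lt_succ_iff.1 hm⟩ := fun m hm => rfl
        have h0 : ∀ h : 0 < k + 1,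
            (Fin.cons p.1 V.1 : Fin (k+1) → ℝ × ℝ) ⟨0, h⟩ = p.1 := fun _ => rfl
        rw [hE ⟨p, V⟩, Fin.prod_univ_succ]
        simp only [Fin.cons_zero, Fin.cons_succ, Fin.val_succ, Fin.val_zero,
          Function.comp_apply, dif_pos (Nat.succ_pos k), h0, hsucc, mul_assoc,
          Nat.add_lt_add_iff_right, Nat.lt_add_one_iff, Nat.succ_le_iff]
        rw [dif_pos (Nat.zero_le k)]
      rw [tsum_congr (fun p => tsum_congr (fun V => hpoint p V))]
      have hinner : ∀ p : Gsub B a 1,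
          (∑' V : TT B p.1.2 k, mBE B a p.1.1 ^ L 0 * (lenE p.1 ^ s 0 *
            (mBE B p.1.2 (if h : 0 < k then (V.1 ⟨0, h⟩).1 else 1) ^ (L ∘ Fin.succ) 0 *
              ∏ i : Fin k, (lenE (V.1 i) ^ (s ∘ Fin.succ) i *
                mBE B (V.1 i).2
                  (if h : (i : ℕ) + 1 < k then (V.1 ⟨(i : ℕ) + 1, h⟩).1 else 1)
                    ^ (L ∘ Fin.succ) i.succ))))
            = mBE B a p.1.1 ^ L 0 * (lenE p.1 ^ s 0 *
                FF B (List.ofFn fun i => ((L ∘ Fin.succ) i.castSucc, (s ∘ Fin.succ) i))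
                  ((L ∘ Fin.succ) (Fin.last k)) p.1.2) := by
        intro p
        rw [ENNReal.tsum_mul_left, ENNReal.tsum_mul_left, ← mStarRE, ih]
      rw [tsum_congr hinner]
      rw [FF, List.ofFn_succ, Fext_cons]
      have harg : (List.ofFn fun i : Fin k => (L (Fin.succ i).castSucc, s i.succ))
          = List.ofFn fun i : Fin k => ((L ∘ Fin.succ) i.castSucc, (s ∘ Fin.succ) i) := by
        refine congrArg List.ofFn (funext fun i => ?_)
        rfl
      refine tsum_congr fun p => ?_
      rw [show (L (Fin.last (k+1))) = (L ∘ Fin.succ) (Fin.last k) from rfl]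
      rw [show (L (0 : Fin (k+2))) = L (Fin.castSucc 0) from rfl]
      rw [harg]
      rfl

/-! ### transfers to the real-valued functions -/

theorem massBetween_eq (hB : IsIntervalPartition 1 B) (u v : ℝ) :
    massBetween B u v = (mBE B u v).toReal := by
  rw [massBetween, mBE, ENNReal.tsum_toReal_eq (fun p => lenE_ne_top _)]
  exact tsum_congr fun p =>
    (ENNReal.toReal_ofReal (by linarith [block_lt hB p.2.1])).symm

theorem mStarRE_ne_top (hB : IsIntervalPartition 1 B) (k : ℕ) (s : Fin k → ℕ)
    (L : Fin (k + 1) → ℕ) (V : TT B 0 k) :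
    (mBE B 0 (if h : 0 < k then (V.1 ⟨0, h⟩).1 else 1) ^ L 0 *
      ∏ i : Fin k, (lenE (V.1 i) ^ s i *
        mBE B (V.1 i).2 (if h : (i : ℕ) + 1 < k then (V.1 ⟨(i : ℕ) + 1, h⟩).1 else 1)
          ^ L i.succ)) ≠ ⊤ := by
  refine ENNReal.mul_ne_top (ENNReal.pow_ne_top (mBE_ne_top hB _ _)) ?_
  refine ENNReal.prod_ne_top fun i _ => ?_
  exact ENNReal.mul_ne_top (ENNReal.pow_ne_top (lenE_ne_top _))
    (ENNReal.pow_ne_top (mBE_ne_top hB _ _))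

theorem mStar_eq_toReal (hB : IsIntervalPartition 1 B) (k : ℕ) (s : Fin k → ℕ)
    (L : Fin (k + 1) → ℕ) :
    mStar k s L 1 B = (mStarRE B 0 k s L).toReal := by
  obtain ⟨e, he⟩ : ∃ e : TT B 0 k ≃
      {U : Fin k → ℝ × ℝ // (∀ j, U j ∈ B) ∧ BlocksStrictMono U},
      ∀ V, (e V).1 = V.1 := by
    refine ⟨⟨fun V => ⟨V.1, fun j => (V.2.1 j).1, V.2.2⟩,
      fun U => ⟨U.1, fun j => ⟨U.2.1 j, block_nonneg hB (U.2.1 j),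
        block_le_one hB (U.2.1 j)⟩, U.2.2⟩,
      fun V => Subtype.ext rfl, fun U => Subtype.ext rfl⟩, fun V => rfl⟩
  rw [mStar, ← e.tsum_eq, mStarRE,
    ENNReal.tsum_toReal_eq (fun V => mStarRE_ne_top hB k s L V)]
  refine tsum_congr fun V => ?_
  simp only [he]
  rw [ENNReal.toReal_mul, ENNReal.toReal_prod]
  congr 1
  · rw [massBetween_eq hB, ENNReal.toReal_pow]
  refine Finset.prod_congr rfl fun i _ => ?_
  rw [ENNReal.toReal_mul]
  congr 1
  · rw [ENNReal.toReal_pow, lenE,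
      ENNReal.toReal_ofReal (by linarith [block_lt hB (V.2.1 i).1])]
  · rw [massBetween_eq hB, ENNReal.toReal_pow]

theorem mCirc_eq_toReal (hB : IsIntervalPartition 1 B) (σ : List ℕ) :
    mCirc σ B = (mStarRE B 0 σ.length σ.get (fun _ => 0)).toReal := by
  obtain ⟨e, he⟩ : ∃ e : TT B 0 σ.length ≃
      {U : Fin σ.length → ℝ × ℝ // (∀ j, U j ∈ B) ∧ BlocksStrictMono U},
      ∀ V, (e V).1 = V.1 := by
    refine ⟨⟨fun V => ⟨V.1, fun j => (V.2.1 j).1, V.2.2⟩,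
      fun U => ⟨U.1, fun j => ⟨U.2.1 j, block_nonneg hB (U.2.1 j),
        block_le_one hB (U.2.1 j)⟩, U.2.2⟩,
      fun V => Subtype.ext rfl, fun U => Subtype.ext rfl⟩, fun V => rfl⟩
  rw [mCirc, ← e.tsum_eq, mStarRE,
    ENNReal.tsum_toReal_eq (fun V => mStarRE_ne_top hB σ.length σ.get (fun _ => 0) V)]
  refine tsum_congr fun V => ?_
  simp only [he, pow_zero, one_mul, mul_one]
  rw [ENNReal.toReal_prod]
  refine Finset.prod_congr rfl fun i _ => ?_
  rw [ENNReal.toReal_pow, lenE,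
    ENNReal.toReal_ofReal (by linarith [block_lt hB (V.2.1 i).1])]

/-! ### boundedness of `FF` -/

theorem FF_le_one (hB : IsIntervalPartition 1 B) {d : List (ℕ × ℕ)}
    (hd : ∀ x ∈ d, 1 ≤ x.2) (T : ℕ) (a : ℝ) : FF B d T a ≤ 1 := by
  induction d generalizing a with
  | nil => exact pow_le_one' (mBE_le_one hB a 1) T
  | cons q d ih =>
      rw [FF, Fext_cons]
      have hbd : ∀ p : Gsub B a 1,
          mBE B a p.1.1 ^ q.1 *
            (lenE p.1 ^ q.2 * Fext B d (fun x => mBE B x 1 ^ T) p.1.2) ≤ lenE p.1 := by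
        intro p
        obtain ⟨m, hm⟩ := Nat.exists_eq_add_of_le (hd q List.mem_cons_self)
        calc mBE B a p.1.1 ^ q.1 *
            (lenE p.1 ^ q.2 * Fext B d (fun x => mBE B x 1 ^ T) p.1.2)
            ≤ 1 * (lenE p.1 ^ q.2 * 1) := by
              refine mul_le_mul' (pow_le_one' (mBE_le_one hB _ _) _)
                (mul_le_mul' le_rfl ?_)
              exact ih (fun x hx => hd x (List.mem_cons_of_mem q hx)) p.1.2
          _ = lenE p.1 ^ q.2 := by rw [one_mul, mul_one]
          _ = lenE p.1 ^ 1 * lenE p.1 ^ m := by rw [← pow_add, ← hm]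
          _ ≤ lenE p.1 ^ 1 * 1 :=
              mul_le_mul' le_rfl (pow_le_one' (lenE_le_one hB p.2.1) m)
          _ = lenE p.1 := by rw [mul_one, pow_one]
      calc (∑' p : Gsub B a 1, mBE B a p.1.1 ^ q.1 *
            (lenE p.1 ^ q.2 * Fext B d (fun x => mBE B x 1 ^ T) p.1.2))
          ≤ ∑' p : Gsub B a 1, lenE p.1 :=
            ENNReal.tsum_le_tsum hbd
        _ = mBE B a 1 := rfl
        _ ≤ 1 := mBE_le_one hB a 1

theorem FF_ne_top (hB : IsIntervalPartition 1 B) {d : List (ℕ × ℕ)}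
    (hd : ∀ x ∈ d, 1 ≤ x.2) (T : ℕ) (a : ℝ) : FF B d T a ≠ ⊤ :=
  ne_top_of_le_ne_top ENNReal.one_ne_top (FF_le_one hB hd T a)

end

/-! ### real-valued configuration functions on `IH1` -/

/-- the real-valued function on interval partitions attached to a configuration -/
noncomputable def mFR (d : List (ℕ × ℕ)) (T : ℕ) : IH1 → ℝ :=
  fun β => (FF β.1 d T 0).toReal

theorem mFR_key_cons (pre : List (ℕ × ℕ)) {t : ℕ} (ht : 1 ≤ t) (s' : ℕ)
    (post : List (ℕ × ℕ)) (T : ℕ)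
    (hpre : ∀ x ∈ pre, 1 ≤ x.2) (hs' : 1 ≤ s') (hpost : ∀ x ∈ post, 1 ≤ x.2) :
    mFR (pre ++ (t, s') :: post) T = fun β =>
      ∑ r ∈ Finset.Icc 1 t, (t.choose r : ℝ) *
        mFR (pre ++ (0, r) :: (t - r, s') :: post) T β := by
  funext β
  have hB := β.2
  have hexps : ∀ r, 1 ≤ r → ∀ x ∈ pre ++ (0, r) :: (t - r, s') :: post, 1 ≤ x.2 := by
    intro r hr x hx
    rcases List.mem_append.1 hx with h | h
    · exact hpre x h
    · rcases List.mem_cons.1 h with h | h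
      · rw [h]; exact hr
      · rcases List.mem_cons.1 h with h | h
        · rw [h]; exact hs'
        · exact hpost x h
  rw [mFR, keyF_cons hB pre ht s' post T 0,
    ENNReal.toReal_sum (fun r hr => ENNReal.mul_ne_top (ENNReal.natCast_ne_top _)
      (FF_ne_top hB (hexps r (Finset.mem_Icc.1 hr).1) T 0))]
  refine Finset.sum_congr rfl fun r hr => ?_
  rw [ENNReal.toReal_mul, ENNReal.toReal_natCast, mFR]

theorem mFR_key_last (d : List (ℕ × ℕ)) {T : ℕ} (hT : 1 ≤ T)
    (hd : ∀ x ∈ d, 1 ≤ x.2) :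
    mFR d T = fun β =>
      ∑ r ∈ Finset.Icc 1 T, (T.choose r : ℝ) * mFR (d ++ [(0, r)]) (T - r) β := by
  funext β
  have hB := β.2
  have hexps : ∀ r, 1 ≤ r → ∀ x ∈ d ++ [(0, r)], 1 ≤ x.2 := by
    intro r hr x hx
    rcases List.mem_append.1 hx with h | h
    · exact hd x h
    · rcases List.mem_singleton.1 h with h
      rw [h]; exact hr
  rw [mFR, keyF_last hB d hT 0,
    ENNReal.toReal_sum (fun r hr => ENNReal.mul_ne_top (ENNReal.natCast_ne_top _)
      (FF_ne_top hB (hexps r (Finset.mem_Icc.1 hr).1) (T - r) 0))]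
  refine Finset.sum_congr rfl fun r hr => ?_
  rw [ENNReal.toReal_mul, ENNReal.toReal_natCast, mFR]

theorem mStar_fun_eq (k : ℕ) (s : Fin k → ℕ) (L : Fin (k + 1) → ℕ) :
    (fun β : IH1 => mStar k s L 1 β.1)
      = mFR (List.ofFn fun i => (L i.castSucc, s i)) (L (Fin.last k)) := by
  funext β
  rw [mStar_eq_toReal β.2, mStarRE_eq_FF β.2, mFR]

theorem mCirc_fun_eq (σ : List ℕ) :
    (fun β : IH1 => mCirc σ β.1) = mFR (σ.map fun n => (0, n)) 0 := by
  funext β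
  rw [mCirc_eq_toReal β.2, mStarRE_eq_FF β.2, mFR]
  have harg : (List.ofFn fun i : Fin σ.length => ((fun _ => (0:ℕ)) i.castSucc, σ.get i))
      = σ.map fun n => (0, n) := by
    refine List.ext_get (by simp) fun i h1 h2 => ?_
    simp [List.get_ofFn]
  rw [harg]

/-- configurations with every block exponent at least 2 are `mStar` functions -/
theorem mFR_eq_mStar_fun (d : List (ℕ × ℕ)) (T : ℕ) :
    mFR d T = fun β : IH1 => mStar d.length (fun i => (d.get i).2)
      (Fin.lastCases T (fun i => (d.get i).1)) 1 β.1 := by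
  rw [mStar_fun_eq]
  have harg : (List.ofFn fun i : Fin d.length =>
      ((Fin.lastCases T (fun j : Fin d.length => (d.get j).1) : Fin (d.length + 1) → ℕ)
        i.castSucc, (d.get i).2)) = d := by
    refine List.ext_get (by simp) fun i h1 h2 => ?_
    simp only [List.get_ofFn, Fin.lastCases_castSucc]
    rfl
  rw [harg, Fin.lastCases_last]

/-! ### the span argument -/

/-- split a list at the last element satisfying `P` -/
theorem exists_last_split {α : Type*} (P : α → Prop) [DecidablePred P] :
    ∀ d : List α, (∃ x ∈ d, P x) →
      ∃ pre x post, d = pre ++ x :: post ∧ P x ∧ ∀ y ∈ post, ¬ P y := by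
  intro d
  induction d using List.reverseRecOn with
  | nil => rintro ⟨x, hx, -⟩; exact absurd hx List.not_mem_nil
  | append_singleton ds y ihd =>
      rintro ⟨x, hx, hPx⟩
      by_cases hPy : P y
      · exact ⟨ds, y, [], rfl, hPy, by simp⟩
      · have hds : ∃ x ∈ ds, P x := by
          rcases List.mem_append.1 hx with h | h
          · exact ⟨x, h, hPx⟩
          · rw [List.mem_singleton.1 h] at hPx
            exact absurd hPx hPy
        obtain ⟨pre, z, post, hsplit, hPz, hpost⟩ := ihd hds
        refine ⟨pre, z, post ++ [y], by rw [hsplit]; simp, hPz, fun w hw => ?_⟩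
        rcases List.mem_append.1 hw with h | h
        · exact hpost w h
        · rw [List.mem_singleton.1 h]
          exact hPy

/-- isolating the `r = 1` term of a key identity inside a submodule -/
theorem span_isolate (M : Submodule ℝ (IH1 → ℝ)) {t : ℕ} (ht : 1 ≤ t)
    (G : IH1 → ℝ) (F : ℕ → IH1 → ℝ)
    (hkey : G = fun β => ∑ r ∈ Finset.Icc 1 t, (t.choose r : ℝ) * F r β)
    (hG : G ∈ M) (hF : ∀ r, 2 ≤ r → r ≤ t → F r ∈ M) : F 1 ∈ M := by
  have hsplit : Finset.Icc 1 t = insert 1 (Finset.Icc 2 t) := by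
    ext r
    simp only [Finset.mem_Icc, Finset.mem_insert]
    omega
  have h1 : G = (t : ℝ) • F 1 + ∑ r ∈ Finset.Icc 2 t, (t.choose r : ℝ) • F r := by
    rw [hkey]
    funext β
    rw [Pi.add_apply, Pi.smul_apply, Finset.sum_apply, hsplit,
      Finset.sum_insert (by simp), Nat.choose_one_right]
    simp [smul_eq_mul]
  have ht0 : (t : ℝ) ≠ 0 := by
    simp only [ne_eq, Nat.cast_eq_zero]
    omega
  have h2 : F 1 = (t : ℝ)⁻¹ • (G - ∑ r ∈ Finset.Icc 2 t, (t.choose r : ℝ) • F r) := by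
    rw [h1]
    rw [add_sub_cancel_right, smul_smul, inv_mul_cancel₀ ht0, one_smul]
  rw [h2]
  refine Submodule.smul_mem _ _ (Submodule.sub_mem _ hG (Submodule.sum_mem _ fun r hr => ?_))
  rw [Finset.mem_Icc] at hr
  exact Submodule.smul_mem _ _ (hF r hr.1 hr.2)

/-- the span of the `mCirc` functions -/
noncomputable def SC : Submodule ℝ (IH1 → ℝ) :=
  Submodule.span ℝ {f : IH1 → ℝ | ∃ σ : List ℕ, (∀ p ∈ σ, 1 ≤ p) ∧
    f = fun β => mCirc σ β.1}

/-- the span of the `mStar` functions -/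
noncomputable def SS : Submodule ℝ (IH1 → ℝ) :=
  Submodule.span ℝ {f : IH1 → ℝ |
    ∃ (k : ℕ) (s : Fin k → ℕ) (L : Fin (k + 1) → ℕ),
      (∀ i, 2 ≤ s i) ∧ f = fun β => mStar k s L 1 β.1}

/-- every configuration function lies in the span of the `mCirc`s -/
theorem mFR_mem_SC : ∀ (N : ℕ) (d : List (ℕ × ℕ)) (T : ℕ),
    (∀ x ∈ d, 1 ≤ x.2) → T + (d.map Prod.fst).sum = N → mFR d T ∈ SC := by
  intro N
  induction N using Nat.strong_induction_on with
  | _ N ih =>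
    intro d T hd hN
    by_cases hT : 1 ≤ T
    · -- expand the trailing gap
      rw [mFR_key_last d hT hd]
      have hfun : (fun β => ∑ r ∈ Finset.Icc 1 T, (T.choose r : ℝ) *
          mFR (d ++ [(0, r)]) (T - r) β)
            = ∑ r ∈ Finset.Icc 1 T, (T.choose r : ℝ) • mFR (d ++ [(0, r)]) (T - r) := by
        funext β
        rw [Finset.sum_apply]
        exact Finset.sum_congr rfl fun r _ => rfl
      rw [hfun]
      refine Submodule.sum_mem _ fun r hr => Submodule.smul_mem _ _ ?_
      rw [Finset.mem_Icc] at hr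
      refine ih ((T - r) + ((d ++ [(0, r)]).map Prod.fst).sum) ?_ _ _ ?_ rfl
      · rw [List.map_append, List.sum_append]
        simp only [List.map_cons, List.map_nil, List.sum_cons, List.sum_nil]
        omega
      · intro x hx
        rcases List.mem_append.1 hx with h | h
        · exact hd x h
        · rw [List.mem_singleton.1 h]
          exact hr.1
    · have hT0 : T = 0 := by omega
      subst hT0
      by_cases hz : ∀ x ∈ d, x.1 = 0
      · -- base case : `mCirc` generator
        have h1 : d = (d.map Prod.snd).map (fun n => (0, n)) := by
          rw [List.map_map]
          refine List.ext_get (by simp) fun i hi1 hi2 => ?_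
          simp only [List.get_eq_getElem, List.getElem_map]
          have h0 := hz (d.get ⟨i, hi1⟩) (d.get_mem _)
          exact Prod.ext h0 rfl
        rw [show mFR d 0 = (fun β : IH1 => mCirc (d.map Prod.snd) β.1) by
          rw [mCirc_fun_eq, ← h1]]
        refine Submodule.subset_span ⟨d.map Prod.snd, fun p hp => ?_, rfl⟩
        obtain ⟨x, hx, rfl⟩ := List.mem_map.1 hp
        exact hd x hx
      · -- expand an inner gap
        push_neg at hz
        obtain ⟨x, hxmem, hx1⟩ := hz
        obtain ⟨pre, post, rfl⟩ := List.append_of_mem hxmem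
        rcases x with ⟨g, s'⟩
        have hg : 1 ≤ g := by
          simp only [ne_eq] at hx1
          omega
        have hpre : ∀ y ∈ pre, 1 ≤ y.2 := fun y hy =>
          hd y (List.mem_append.2 (Or.inl hy))
        have hpost : ∀ y ∈ post, 1 ≤ y.2 := fun y hy =>
          hd y (List.mem_append.2 (Or.inr (List.mem_cons_of_mem _ hy)))
        have hs' : 1 ≤ s' := hd (g, s') hxmem
        rw [mFR_key_cons pre hg s' post 0 hpre hs' hpost]
        have hfun : (fun β => ∑ r ∈ Finset.Icc 1 g, (g.choose r : ℝ) *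
            mFR (pre ++ (0, r) :: (g - r, s') :: post) 0 β)
              = ∑ r ∈ Finset.Icc 1 g, (g.choose r : ℝ) •
                  mFR (pre ++ (0, r) :: (g - r, s') :: post) 0 := by
          funext β
          rw [Finset.sum_apply]
          exact Finset.sum_congr rfl fun r _ => rfl
        rw [hfun]
        refine Submodule.sum_mem _ fun r hr => Submodule.smul_mem _ _ ?_
        rw [Finset.mem_Icc] at hr
        refine ih (0 + ((pre ++ (0, r) :: (g - r, s') :: post).map Prod.fst).sum) ?_ _ _
          ?_ rfl
        · rw [← hN]
          simp only [List.map_append, List.sum_append, List.map_cons, List.sum_cons]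
          omega
        · intro y hy
          rcases List.mem_append.1 hy with h | h
          · exact hpre y h
          · rcases List.mem_cons.1 h with h | h
            · rw [h]; exact hr.1
            · rcases List.mem_cons.1 h with h | h
              · rw [h]; exact hs'
              · exact hpost y h

/-- counting exponent-one blocks across a decomposition -/
theorem count_split (l₁ l₂ : List (ℕ × ℕ)) (x : ℕ × ℕ) (h2 : ∀ y ∈ l₂, y.2 ≠ 1) :
    ((l₁ ++ x :: l₂).filter (fun x => x.2 = 1)).length
      = (l₁.filter (fun x => x.2 = 1)).length + (if x.2 = 1 then 1 else 0) := by
  rw [List.filter_append, List.length_append, List.filter_cons]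
  have hnil : l₂.filter (fun x : ℕ × ℕ => decide (x.2 = 1)) = [] :=
    List.filter_eq_nil_iff.2 (fun z hz => by simpa using h2 z hz)
  by_cases hx : x.2 = 1
  · rw [if_pos (by simpa using hx), if_pos hx, hnil]
    simp
  · rw [if_neg (by simpa using hx), if_neg hx, hnil]
    simp

/-- every configuration function whose exponent-one blocks have zero left gaps
lies in the span of the `mStar`s -/
theorem mFR_mem_SS : ∀ (n : ℕ) (d : List (ℕ × ℕ)) (T : ℕ),
    (∀ x ∈ d, 1 ≤ x.2) → (∀ x ∈ d, x.2 = 1 → x.1 = 0) →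
    (d.filter (fun x => x.2 = 1)).length = n → mFR d T ∈ SS := by
  intro n
  induction n using Nat.strong_induction_on with
  | _ n ih =>
    intro d T hd hinv hn
    by_cases hone : ∃ x ∈ d, x.2 = 1
    · -- remove the last exponent-one block
      obtain ⟨pre, x, post, rfl, hx1, hpost1⟩ :=
        exists_last_split (fun x : ℕ × ℕ => x.2 = 1) d hone
      obtain ⟨g, s1⟩ := x
      have hs1 : s1 = 1 := hx1
      subst hs1
      have hg0 : g = 0 := hinv (g, 1) (List.mem_append.2
        (Or.inr List.mem_cons_self)) rfl
      subst hg0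
      have hpre : ∀ y ∈ pre, 1 ≤ y.2 := fun y hy =>
        hd y (List.mem_append.2 (Or.inl hy))
      have hpreinv : ∀ y ∈ pre, y.2 = 1 → y.1 = 0 := fun y hy =>
        hinv y (List.mem_append.2 (Or.inl hy))
      have hpost : ∀ y ∈ post, 1 ≤ y.2 := fun y hy =>
        hd y (List.mem_append.2 (Or.inr (List.mem_cons_of_mem _ hy)))
      have hpost2 : ∀ y ∈ post, 2 ≤ y.2 := by
        intro y hy
        have h1 := hpost y hy
        have h2 := hpost1 y hy
        omega
      have hcn := count_split pre post (0, 1) (fun y hy => hpost1 y hy)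
      rw [hn, if_pos rfl] at hcn
      have hcount : (pre.filter (fun x => x.2 = 1)).length = n - 1 ∧ 1 ≤ n := by omega
      cases post with
      | nil =>
          refine span_isolate SS (t := T + 1) (by omega)
            (mFR pre (T + 1)) (fun r => mFR (pre ++ [(0, r)]) (T + 1 - r)) ?_ ?_ ?_
          · exact mFR_key_last pre (by omega) hpre
          · exact ih (n - 1) (by omega) pre (T + 1) hpre hpreinv hcount.1
          · intro r hr2 hrt
            refine ih (n - 1) (by omega) _ _ ?_ ?_ ?_
            · intro y hy
              rcases List.mem_append.1 hy with h | h
              · exact hpre y h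
              · rw [List.mem_singleton.1 h]; omega
            · intro y hy
              rcases List.mem_append.1 hy with h | h
              · exact hpreinv y h
              · rw [List.mem_singleton.1 h]
                intro h1
                simp only at h1
                omega
            · rw [count_split pre [] (0, r) (by simp), if_neg (by simp; omega)]
              omega
      | cons y post₂ =>
          obtain ⟨g₂, s₂⟩ := y
          have hs₂ : 2 ≤ s₂ := hpost2 (g₂, s₂) List.mem_cons_self
          have hpost₂ : ∀ y ∈ post₂, 1 ≤ y.2 := fun y hy =>
            hpost y (List.mem_cons_of_mem _ hy)
          have hpost₂2 : ∀ y ∈ post₂, 2 ≤ y.2 := fun y hy =>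
            hpost2 y (List.mem_cons_of_mem _ hy)
          refine span_isolate SS (t := g₂ + 1) (by omega)
            (mFR (pre ++ (g₂ + 1, s₂) :: post₂) T)
            (fun r => mFR (pre ++ (0, r) :: (g₂ + 1 - r, s₂) :: post₂) T) ?_ ?_ ?_
          · exact mFR_key_cons pre (by omega) s₂ post₂ T hpre (by omega) hpost₂
          · -- the main term
            refine ih (n - 1) (by omega) _ _ ?_ ?_ ?_
            · intro z hz
              rcases List.mem_append.1 hz with h | h
              · exact hpre z h
              · rcases List.mem_cons.1 h with h | h
                · rw [h]; omega
                · exact hpost₂ z h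
            · intro z hz
              rcases List.mem_append.1 hz with h | h
              · exact hpreinv z h
              · rcases List.mem_cons.1 h with h | h
                · rw [h]; intro h1; simp only at h1; omega
                · intro h1
                  exact absurd h1 (by have := hpost₂2 z h; omega)
            · rw [count_split pre post₂ (g₂ + 1, s₂)
                (fun z hz => by have := hpost₂2 z hz; omega),
                if_neg (by simp; omega)]
              omega
          · -- the corrections
            intro r hr2 hrt
            refine ih (n - 1) (by omega) _ _ ?_ ?_ ?_
            · intro z hz
              rcases List.mem_append.1 hz with h | h
              · exact hpre z h
              · rcases List.mem_cons.1 h with h | h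
                · rw [h]; omega
                · rcases List.mem_cons.1 h with h | h
                  · rw [h]; omega
                  · exact hpost₂ z h
            · intro z hz
              rcases List.mem_append.1 hz with h | h
              · exact hpreinv z h
              · rcases List.mem_cons.1 h with h | h
                · rw [h]; intro h1; simp only at h1; omega
                · rcases List.mem_cons.1 h with h | h
                  · rw [h]; intro h1; simp only at h1; omega
                  · intro h1
                    exact absurd h1 (by have := hpost₂2 z h; omega)
            · rw [count_split pre ((g₂ + 1 - r, s₂) :: post₂) (0, r) (fun z hz => by
                rcases List.mem_cons.1 hz with h | h
                · rw [h]; simp only; omega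
                · have := hpost₂2 z h; omega),
                if_neg (by simp; omega)]
              omega
    · -- base case: all exponents at least 2, a generator
      push_neg at hone
      have h2 : ∀ x ∈ d, 2 ≤ x.2 := by
        intro x hx
        have h3 := hd x hx
        have h4 := hone x hx
        omega
      refine Submodule.subset_span ⟨d.length, (fun i => (d.get i).2),
        Fin.lastCases T (fun i => (d.get i).1), fun i => h2 _ (d.get_mem _),
        (mFR_eq_mStar_fun d T)⟩

end IPgame

/-- As subspaces of the real vector space of functions `I_{H,1} → ℝ`, the linear span
of the functions `m°_σ` (over all compositions `σ`) coincides with the linear span of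
the functions `m*_σ` (over all compositions, parametrized as
`σ = 1^{L 0} ⋆ s 0 ⋆ 1^{L 1} ⋆ ⋯ ⋆ s (k-1) ⋆ 1^{L k}` with all `s i ≥ 2`). -/
theorem span_mCirc_eq_span_mStar :
    Submodule.span ℝ {f : IH1 → ℝ | ∃ σ : List ℕ, (∀ p ∈ σ, 1 ≤ p) ∧
        f = fun β => mCirc σ β.1} =
      Submodule.span ℝ {f : IH1 → ℝ |
        ∃ (k : ℕ) (s : Fin k → ℕ) (L : Fin (k + 1) → ℕ),
          (∀ i, 2 ≤ s i) ∧ f = fun β => mStar k s L 1 β.1} := by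
  refine le_antisymm (Submodule.span_le.2 ?_) (Submodule.span_le.2 ?_)
  · rintro f ⟨σ, hσ, rfl⟩
    have h1 : (fun β : IH1 => mCirc σ β.1) ∈ IPgame.SS := by
      rw [IPgame.mCirc_fun_eq σ]
      refine IPgame.mFR_mem_SS _ _ 0 ?_ ?_ rfl
      · intro x hx
        obtain ⟨p, hp, rfl⟩ := List.mem_map.1 hx
        exact hσ p hp
      · intro x hx
        obtain ⟨p, hp, rfl⟩ := List.mem_map.1 hx
        intro _
        rfl
    exact h1
  · rintro f ⟨k, s, L, hs, rfl⟩
    have h1 : (fun β : IH1 => mStar k s L 1 β.1) ∈ IPgame.SC := by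
      rw [IPgame.mStar_fun_eq k s L]
      refine IPgame.mFR_mem_SC _ _ _ ?_ rfl
      intro x hx
      obtain ⟨i, hi⟩ := List.mem_ofFn.1 hx
      rw [← hi]
      exact le_trans (by omega) (hs i)
    exact h1
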